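/- Let X₁, X₂, Y be Banach spaces, G ⊆ X := X₁ × X₂ an open set, and f : G → Y a mapping which is continuous with respect to the second variable. Then the set of points x ∈ G at which the partial Fréchet derivative of f with respect to the first variable exists is an F_{σδσ} set. -/

import Mathlib

open Metric Set Topology

/-- An `Fσ` set: a countable union of closed sets. -/
def IsFSigma {Z : Type*} [TopologicalSpace Z] (s : Set Z) : Prop :=
  ∃ u : ℕ → Set Z, (∀ n, IsClosed (u n)) ∧ s = ⋃ n, u n

/-- An `Fσδ` set: a countable intersection of `Fσ` sets. -/
def IsFSigmaDelta {Z : Type*} [TopologicalSpace Z] (s : Set Z) : Prop :=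
  ∃ u : ℕ → Set Z, (∀ n, IsFSigma (u n)) ∧ s = ⋂ n, u n

/-- An `Fσδσ` set: a countable union of `Fσδ` sets. -/
def IsFSigmaDeltaSigma {Z : Type*} [TopologicalSpace Z] (s : Set Z) : Prop :=
  ∃ u : ℕ → Set Z, (∀ n, IsFSigmaDelta (u n)) ∧ s = ⋃ n, u n

open Filter Asymptotics

section AuxDiff

variable {X : Type*} {Y : Type*} [NormedAddCommGroup X] [NormedSpace ℝ X]
  [NormedAddCommGroup Y] [NormedSpace ℝ Y]

theorem aux_diff [CompleteSpace Y] (φ : X → Y) (C : ℝ)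
    (H : ∀ ε : ℝ, 0 < ε → ∃ δ : ℝ, 0 < δ ∧ ∀ u v : X, ‖u‖ ≤ δ → ‖v‖ ≤ δ →
      ‖φ u + φ v - φ (u + v)‖ ≤ ε * (‖u‖ + ‖v‖) ∧
      (∀ t : ℝ, 0 ≤ t → t ≤ 1 → ‖φ (t • u) - t • φ u‖ ≤ ε * (t * ‖u‖)) ∧
      ‖φ u‖ ≤ C * ‖u‖) :
    ∃ L : X →L[ℝ] Y, (fun h => φ h - L h) =o[𝓝 0] fun h : X => h := by
  -- the dyadic rescalings
  set s : ℕ → X → Y := fun j h => (2 ^ j : ℝ) • φ (((2 : ℝ) ^ j)⁻¹ • h) with hs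
  have hpow : ∀ j : ℕ, (0 : ℝ) < 2 ^ j := fun j => by positivity
  -- key estimate
  have key : ∀ ε : ℝ, 0 < ε → ∃ δ : ℝ, 0 < δ ∧ ∀ (h : X) (j j' : ℕ), j ≤ j' →
      ‖h‖ ≤ 2 ^ j * δ → ‖s j' h - s j h‖ ≤ ε * ‖h‖ := by
    intro ε hε
    obtain ⟨δ, hδ, hH⟩ := H ε hε
    refine ⟨δ, hδ, fun h j j' hjj hh => ?_⟩
    set u : X := ((2 : ℝ) ^ j)⁻¹ • h with hu
    have hun : ‖u‖ = ((2 : ℝ) ^ j)⁻¹ * ‖h‖ := by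
      rw [hu, norm_smul, norm_inv, Real.norm_eq_abs, abs_of_pos (hpow j)]
    have huδ : ‖u‖ ≤ δ := by
      rw [hun, inv_mul_le_iff₀ (hpow j)]; linarith [hh]
    set t : ℝ := (2 : ℝ) ^ j * ((2 : ℝ) ^ j')⁻¹ with ht
    have ht0 : 0 ≤ t := by positivity
    have hle : (2 : ℝ) ^ j ≤ 2 ^ j' := by
      exact pow_le_pow_right₀ (by norm_num) hjj
    have ht1 : t ≤ 1 := by
      rw [ht, ← div_eq_mul_inv]
      exact (div_le_one (hpow j')).mpr hle
    have hray := (hH u u huδ huδ).2.1 t ht0 ht1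
    have htu : t • u = ((2 : ℝ) ^ j')⁻¹ • h := by
      rw [ht, hu, smul_smul]
      congr 1
      field_simp
    have hdiff : s j' h - s j h = (2 ^ j' : ℝ) • (φ (t • u) - t • φ u) := by
      rw [hs]
      simp only
      rw [htu, smul_sub, smul_smul]
      congr 2
      rw [ht]
      field_simp
    rw [hdiff, norm_smul, Real.norm_eq_abs, abs_of_pos (hpow j')]
    calc (2:ℝ) ^ j' * ‖φ (t • u) - t • φ u‖ ≤ (2:ℝ)^j' * (ε * (t * ‖u‖)) := by
          exact mul_le_mul_of_nonneg_left hray (le_of_lt (hpow j'))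
      _ = ε * ‖h‖ := by
          rw [hun, ht]; field_simp
  -- each sequence is Cauchy
  have hcauchy : ∀ h : X, CauchySeq (fun j => s j h) := by
    intro h
    rw [Metric.cauchySeq_iff']
    intro ε hε
    have hε' : 0 < ε / (2 * (‖h‖ + 1)) := by positivity
    obtain ⟨δ, hδ, hkey⟩ := key _ hε'
    obtain ⟨N, hN⟩ := pow_unbounded_of_one_lt (‖h‖ / δ) (by norm_num : (1:ℝ) < 2)
    refine ⟨N, fun n hn => ?_⟩
    have hhN : ‖h‖ ≤ 2 ^ N * δ := by
      rw [div_lt_iff₀ hδ] at hN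
      linarith
    have := hkey h N n hn hhN
    rw [dist_eq_norm]
    calc ‖s n h - s N h‖ ≤ ε / (2 * (‖h‖ + 1)) * ‖h‖ := this
      _ < ε := by
          rw [div_mul_eq_mul_div, div_lt_iff₀ (by positivity)]
          nlinarith [norm_nonneg h]
  -- the limit map
  set L0 : X → Y := fun h => limUnder atTop (fun j => s j h) with hL0
  have htend : ∀ h : X, Tendsto (fun j => s j h) atTop (𝓝 (L0 h)) := fun h =>
    (hcauchy h).tendsto_limUnder
  -- approximation
  have happrox : ∀ ε : ℝ, 0 < ε → ∃ δ : ℝ, 0 < δ ∧ ∀ h : X, ‖h‖ ≤ δ →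
      ‖φ h - L0 h‖ ≤ ε * ‖h‖ := by
    intro ε hε
    obtain ⟨δ, hδ, hkey⟩ := key ε hε
    refine ⟨δ, hδ, fun h hh => ?_⟩
    have hs0 : s 0 h = φ h := by
      rw [hs]; simp
    have h1 : ∀ j : ℕ, ‖s j h - s 0 h‖ ≤ ε * ‖h‖ := fun j =>
      hkey h 0 j (Nat.zero_le j) (by simpa using hh)
    have h2 : Tendsto (fun j => ‖s j h - s 0 h‖) atTop (𝓝 ‖L0 h - s 0 h‖) :=
      ((htend h).sub tendsto_const_nhds).norm
    have h3 : ‖L0 h - s 0 h‖ ≤ ε * ‖h‖ := le_of_tendsto h2 (Filter.Eventually.of_forall h1)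
    rw [hs0] at h3
    rw [← norm_neg]
    simpa [neg_sub] using h3
  -- linear bound
  have hbound : ∀ h : X, ‖L0 h‖ ≤ C * ‖h‖ := by
    intro h
    obtain ⟨δ, hδ, hH1⟩ := H 1 one_pos
    refine le_of_tendsto (htend h).norm ?_
    obtain ⟨N, hN⟩ := pow_unbounded_of_one_lt (‖h‖ / δ) (by norm_num : (1:ℝ) < 2)
    rw [eventually_atTop]
    refine ⟨N, fun j hj => ?_⟩
    have hnu : ‖((2:ℝ) ^ j)⁻¹ • h‖ ≤ δ := by
      rw [norm_smul, norm_inv, Real.norm_eq_abs, abs_of_pos (hpow j),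
        inv_mul_le_iff₀ (hpow j)]
      rw [div_lt_iff₀ hδ] at hN
      have h2 : (2:ℝ) ^ N ≤ 2 ^ j := pow_le_pow_right₀ (by norm_num) hj
      nlinarith [hδ.le]
    have := (hH1 _ _ hnu hnu).2.2
    rw [hs]
    simp only
    rw [norm_smul, Real.norm_eq_abs, abs_of_pos (hpow j)]
    calc (2:ℝ) ^ j * ‖φ (((2:ℝ) ^ j)⁻¹ • h)‖ ≤ (2:ℝ) ^ j * (C * ‖((2:ℝ) ^ j)⁻¹ • h‖) :=
          mul_le_mul_of_nonneg_left this (hpow j).le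
      _ = C * ‖h‖ := by
          rw [norm_smul, norm_inv, Real.norm_eq_abs, abs_of_pos (hpow j)]
          field_simp
          try ring
  -- additivity
  have hadd : ∀ u v : X, L0 (u + v) = L0 u + L0 v := by
    intro u v
    have hd : Tendsto (fun j => s j (u + v) - s j u - s j v) atTop
        (𝓝 (L0 (u + v) - L0 u - L0 v)) := (((htend (u+v)).sub (htend u)).sub (htend v))
    have hnorm : ∀ ε : ℝ, 0 < ε → ‖L0 (u + v) - L0 u - L0 v‖ ≤ ε * (‖u‖ + ‖v‖) := by
      intro ε hε
      obtain ⟨δ, hδ, hH'⟩ := H ε hε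
      refine le_of_tendsto hd.norm ?_
      obtain ⟨N, hN⟩ := pow_unbounded_of_one_lt ((max ‖u‖ ‖v‖) / δ) (by norm_num : (1:ℝ) < 2)
      rw [eventually_atTop]
      refine ⟨N, fun j hj => ?_⟩
      have h2j : (2:ℝ) ^ N ≤ 2 ^ j := pow_le_pow_right₀ (by norm_num) hj
      have hm : max ‖u‖ ‖v‖ < 2 ^ j * δ := by
        rw [div_lt_iff₀ hδ] at hN
        nlinarith [hδ.le]
      have hsm : ∀ w : X, ‖w‖ ≤ max ‖u‖ ‖v‖ → ‖((2:ℝ) ^ j)⁻¹ • w‖ ≤ δ := by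
        intro w hw
        rw [norm_smul, norm_inv, Real.norm_eq_abs, abs_of_pos (hpow j),
          inv_mul_le_iff₀ (hpow j)]
        linarith
      have hu' := hsm u (le_max_left _ _)
      have hv' := hsm v (le_max_right _ _)
      have hAdd := (hH' _ _ hu' hv').1
      have hexp : s j (u + v) - s j u - s j v = -((2 ^ j : ℝ) •
          (φ (((2:ℝ) ^ j)⁻¹ • u) + φ (((2:ℝ) ^ j)⁻¹ • v)
            - φ (((2:ℝ) ^ j)⁻¹ • u + ((2:ℝ) ^ j)⁻¹ • v))) := by
        rw [hs]
        simp only [smul_add]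
        rw [smul_sub, smul_add]
        abel
      rw [hexp, norm_neg, norm_smul, Real.norm_eq_abs, abs_of_pos (hpow j)]
      calc (2:ℝ) ^ j * ‖_‖ ≤ (2:ℝ) ^ j *
            (ε * (‖((2:ℝ) ^ j)⁻¹ • u‖ + ‖((2:ℝ) ^ j)⁻¹ • v‖)) :=
            mul_le_mul_of_nonneg_left hAdd (hpow j).le
        _ = ε * (‖u‖ + ‖v‖) := by
            rw [norm_smul, norm_smul, norm_inv, Real.norm_eq_abs, abs_of_pos (hpow j)]
            field_simp
            try ring
    have : ‖L0 (u + v) - L0 u - L0 v‖ ≤ 0 := by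
      refine le_of_forall_pos_le_add ?_
      intro ε hε
      have hε' : 0 < ε / (‖u‖ + ‖v‖ + 1) := by positivity
      have := hnorm _ hε'
      rw [zero_add]
      calc ‖L0 (u + v) - L0 u - L0 v‖ ≤ ε / (‖u‖ + ‖v‖ + 1) * (‖u‖ + ‖v‖) := this
        _ ≤ ε := by
            rw [div_mul_eq_mul_div, div_le_iff₀ (by positivity)]
            nlinarith [norm_nonneg u, norm_nonneg v]
    have h0 : L0 (u + v) - L0 u - L0 v = 0 := norm_le_zero_iff.mp this
    rwa [sub_sub, sub_eq_zero] at h0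
  -- package as a continuous linear map
  have hlip : LipschitzWith (Real.toNNReal C) L0 := by
    refine LipschitzWith.of_dist_le_mul fun a b => ?_
    have hab : L0 a - L0 b = L0 (a - b) := by
      have := hadd (a - b) b
      rw [sub_add_cancel] at this
      rw [this]; abel
    rw [dist_eq_norm, dist_eq_norm, hab]
    calc ‖L0 (a - b)‖ ≤ C * ‖a - b‖ := hbound _
      _ ≤ Real.toNNReal C * ‖a - b‖ := by
          gcongr
          exact Real.le_coe_toNNReal C
  set A : X →+ Y := AddMonoidHom.mk' L0 hadd with hA
  set L : X →L[ℝ] Y := A.toRealLinearMap hlip.continuous with hL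
  have hLcoe : ∀ h : X, L h = L0 h := fun h => rfl
  refine ⟨L, ?_⟩
  rw [isLittleO_iff]
  intro c hc
  obtain ⟨δ, hδ, ha⟩ := happrox c hc
  have : Metric.closedBall (0:X) δ ∈ 𝓝 (0:X) := Metric.closedBall_mem_nhds 0 hδ
  filter_upwards [this] with h hh
  rw [Metric.mem_closedBall, dist_zero_right] at hh
  rw [hLcoe]
  simpa using ha h hh

end AuxDiff

section Pred

variable {X₁ X₂ Y : Type*} [NormedAddCommGroup X₁] [NormedSpace ℝ X₁]
  [NormedAddCommGroup X₂] [NormedSpace ℝ X₂]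
  [NormedAddCommGroup Y] [NormedSpace ℝ Y]

/-- The increment of `f` in the first variable. -/
def phiAux (f : X₁ × X₂ → Y) (x : X₁ × X₂) (h : X₁) : Y := f (x.1 + h, x.2) - f x

/-- The quantitative conditions whose closures generate the final `Fσδσ` decomposition. -/
def PredAux (G : Set (X₁ × X₂)) (f : X₁ × X₂ → Y) (m k n : ℕ) (x : X₁ × X₂) : Prop :=
  Metric.closedBall x (2 / ((n : ℝ) + 1)) ⊆ G ∧
  (∀ u v : X₁, ‖u‖ ≤ 1 / ((n : ℝ) + 1) → ‖v‖ ≤ 1 / ((n : ℝ) + 1) →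
    ‖phiAux f x u + phiAux f x v - phiAux f x (u + v)‖ ≤ (‖u‖ + ‖v‖) / ((k : ℝ) + 1)) ∧
  (∀ u : X₁, ‖u‖ ≤ 1 / ((n : ℝ) + 1) → ∀ t : ℝ, 0 ≤ t → t ≤ 1 →
    ‖phiAux f x (t • u) - t • phiAux f x u‖ ≤ t * ‖u‖ / ((k : ℝ) + 1)) ∧
  (∀ u : X₁, ‖u‖ ≤ 1 / ((n : ℝ) + 1) → ‖phiAux f x u‖ ≤ ((m : ℝ) + 1) * ‖u‖)

set_option maxHeartbeats 1000000 in
theorem predAux_of_diff {G : Set (X₁ × X₂)} (hG : IsOpen G) {f : X₁ × X₂ → Y}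
    {x : X₁ × X₂} (hxG : x ∈ G)
    (hd : DifferentiableAt ℝ (fun t : X₁ => f (t, x.2)) x.1) :
    ∃ m : ℕ, ∀ k : ℕ, ∃ n : ℕ, PredAux G f m k n x := by
  have hL : HasFDerivAt (fun t : X₁ => f (t, x.2))
      (fderiv ℝ (fun t : X₁ => f (t, x.2)) x.1) x.1 := hd.hasFDerivAt
  set L := fderiv ℝ (fun t : X₁ => f (t, x.2)) x.1 with hLdef
  have hlo := hasFDerivAt_iff_isLittleO_nhds_zero.1 hL
  obtain ⟨m, hm⟩ := exists_nat_ge ‖L‖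
  refine ⟨m, fun k => ?_⟩
  set ε : ℝ := 1 / (2 * ((k : ℝ) + 1)) with hε
  have hk1 : (0:ℝ) < (k : ℝ) + 1 := by positivity
  have hεpos : 0 < ε := by positivity
  have hε1 : ε ≤ 1 := by
    rw [hε, div_le_one (by positivity)]
    nlinarith [Nat.cast_nonneg (α := ℝ) k]
  obtain ⟨δ₀, hδ₀, hψ⟩ := Metric.eventually_nhds_iff.mp (isLittleO_iff.mp hlo hεpos)
  obtain ⟨r, hr, hrG⟩ := Metric.isOpen_iff.mp hG x hxG
  obtain ⟨n, hn⟩ := exists_nat_gt (max (2 / r) (4 / δ₀))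
  have hn1 : (0:ℝ) < (n : ℝ) + 1 := by positivity
  have hnr : 2 / ((n : ℝ) + 1) < r := by
    have h1 : 2 / r < (n : ℝ) + 1 := lt_of_le_of_lt (le_max_left _ _) (by linarith)
    rw [div_lt_iff₀ hr] at h1
    rw [div_lt_iff₀ hn1]
    linarith
  have hnδ : 2 / ((n : ℝ) + 1) < δ₀ := by
    have h1 : 4 / δ₀ < (n : ℝ) + 1 := lt_of_le_of_lt (le_max_right _ _) (by linarith)
    rw [div_lt_iff₀ hδ₀] at h1
    rw [div_lt_iff₀ hn1]
    nlinarith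
  -- the estimate in convenient form
  have hψ' : ∀ h : X₁, ‖h‖ ≤ 2 / ((n : ℝ) + 1) →
      ‖f (x.1 + h, x.2) - f x - L h‖ ≤ ε * ‖h‖ := by
    intro h hh
    have : dist h 0 < δ₀ := by
      rw [dist_zero_right]; linarith
    have := hψ this
    simpa using this
  have hhalf : 1 / ((n : ℝ) + 1) ≤ 2 / ((n : ℝ) + 1) := by
    gcongr <;> norm_num
  refine ⟨n, ?_, ?_, ?_, ?_⟩
  · exact (Metric.closedBall_subset_ball hnr).trans hrG
  · intro u v hu hv
    have h1 := hψ' u (hu.trans hhalf)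
    have h2 := hψ' v (hv.trans hhalf)
    have h3 := hψ' (u + v) (by
      calc ‖u + v‖ ≤ ‖u‖ + ‖v‖ := norm_add_le _ _
        _ ≤ 2 / ((n : ℝ) + 1) := by
            have h4 : 1/((n:ℝ)+1) + 1/((n:ℝ)+1) = 2/((n:ℝ)+1) := by ring
            linarith)
    have hid : phiAux f x u + phiAux f x v - phiAux f x (u + v) =
        (f (x.1 + u, x.2) - f x - L u) + (f (x.1 + v, x.2) - f x - L v)
          - (f (x.1 + (u + v), x.2) - f x - L (u + v)) := by
      simp only [phiAux, map_add]
      abel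
    rw [hid]
    calc ‖_‖ ≤ ‖(f (x.1 + u, x.2) - f x - L u) + (f (x.1 + v, x.2) - f x - L v)‖
          + ‖f (x.1 + (u + v), x.2) - f x - L (u + v)‖ := norm_sub_le _ _
      _ ≤ ‖f (x.1 + u, x.2) - f x - L u‖ + ‖f (x.1 + v, x.2) - f x - L v‖
          + ‖f (x.1 + (u + v), x.2) - f x - L (u + v)‖ := by
          gcongr; exact norm_add_le _ _
      _ ≤ ε * ‖u‖ + ε * ‖v‖ + ε * ‖u + v‖ := by gcongr
      _ ≤ ε * ‖u‖ + ε * ‖v‖ + ε * (‖u‖ + ‖v‖) := by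
          gcongr; exact norm_add_le _ _
      _ ≤ (‖u‖ + ‖v‖) / ((k : ℝ) + 1) := by
          have h4 : ε * ‖u‖ + ε * ‖v‖ + ε * (‖u‖ + ‖v‖) = (‖u‖ + ‖v‖) / ((k : ℝ) + 1) := by
            rw [hε]; field_simp; ring
          linarith
  · intro u hu t ht0 ht1
    have htu : ‖t • u‖ = t * ‖u‖ := by
      rw [norm_smul, Real.norm_eq_abs, abs_of_nonneg ht0]
    have h1 := hψ' u (hu.trans hhalf)
    have h2 := hψ' (t • u) (by
      rw [htu]
      calc t * ‖u‖ ≤ 1 * ‖u‖ := by gcongr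
        _ = ‖u‖ := one_mul _
        _ ≤ 2 / ((n : ℝ) + 1) := hu.trans hhalf)
    have hid : phiAux f x (t • u) - t • phiAux f x u =
        (f (x.1 + t • u, x.2) - f x - L (t • u))
          - t • (f (x.1 + u, x.2) - f x - L u) := by
      simp only [phiAux, map_smul, smul_sub]
      abel
    rw [hid]
    calc ‖_‖ ≤ ‖f (x.1 + t • u, x.2) - f x - L (t • u)‖
          + ‖t • (f (x.1 + u, x.2) - f x - L u)‖ := norm_sub_le _ _
      _ ≤ ε * ‖t • u‖ + t * (ε * ‖u‖) := by
          gcongr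
          rw [norm_smul, Real.norm_eq_abs, abs_of_nonneg ht0]
          gcongr
      _ = 2 * ε * (t * ‖u‖) := by rw [htu]; ring
      _ ≤ t * ‖u‖ / ((k : ℝ) + 1) := by
          have h4 : 2 * ε * (t * ‖u‖) = t * ‖u‖ / ((k : ℝ) + 1) := by
            rw [hε]; field_simp
          linarith
  · intro u hu
    have h1 := hψ' u (hu.trans hhalf)
    have : phiAux f x u = (f (x.1 + u, x.2) - f x - L u) + L u := by
      simp only [phiAux]; abel
    rw [this]
    calc ‖_‖ ≤ ‖f (x.1 + u, x.2) - f x - L u‖ + ‖L u‖ := norm_add_le _ _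
      _ ≤ ε * ‖u‖ + ‖L‖ * ‖u‖ := by
          gcongr
          exact L.le_opNorm u
      _ ≤ ((m : ℝ) + 1) * ‖u‖ := by
          have h5 : ε * ‖u‖ ≤ 1 * ‖u‖ := mul_le_mul_of_nonneg_right hε1 (norm_nonneg u)
          have h6 : ‖L‖ * ‖u‖ ≤ (m : ℝ) * ‖u‖ := mul_le_mul_of_nonneg_right hm (norm_nonneg u)
          linarith

set_option maxHeartbeats 2000000 in
theorem closure_predAux {G : Set (X₁ × X₂)} (hG : IsOpen G) {f : X₁ × X₂ → Y}
    (hf : ∀ a₁ : X₁, ContinuousOn (fun t : X₂ => f (a₁, t)) {t : X₂ | (a₁, t) ∈ G})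
    {m k n : ℕ} {x : X₁ × X₂}
    (hx : x ∈ closure {y | PredAux G f m k n y}) :
    x ∈ G ∧ ∀ u v : X₁, ‖u‖ ≤ 1 / (2 * ((n : ℝ) + 1)) → ‖v‖ ≤ 1 / (2 * ((n : ℝ) + 1)) →
      (‖phiAux f x u + phiAux f x v - phiAux f x (u + v)‖ ≤ 3 * (‖u‖ + ‖v‖) / ((k : ℝ) + 1)) ∧
      (∀ t : ℝ, 0 ≤ t → t ≤ 1 →
        ‖phiAux f x (t • u) - t • phiAux f x u‖ ≤ 3 * (t * ‖u‖) / ((k : ℝ) + 1)) ∧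
      ‖phiAux f x u‖ ≤ ((m : ℝ) + 2) * ‖u‖ := by
  have hn1 : (0:ℝ) < (n : ℝ) + 1 := by positivity
  have hk1 : (0:ℝ) < (k : ℝ) + 1 := by positivity
  have hb : Metric.ball x (2 / ((n : ℝ) + 1)) ⊆ G := by
    intro z hz
    rw [mem_ball] at hz
    obtain ⟨y, hy, hxy⟩ := Metric.mem_closure_iff.mp hx (2 / ((n : ℝ) + 1) - dist z x)
      (by linarith [dist_nonneg (x := z) (y := x)])
    refine hy.1 ?_
    rw [Metric.mem_closedBall]
    calc dist z y ≤ dist z x + dist x y := dist_triangle _ _ _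
      _ ≤ 2 / ((n : ℝ) + 1) := by linarith
  have hxG : x ∈ G := hb (mem_ball_self (by positivity))
  have hcont : ∀ w : X₁, ‖w - x.1‖ < 2 / ((n : ℝ) + 1) →
      ContinuousAt (fun τ : X₂ => f (w, τ)) x.2 := by
    intro w hw
    have hwG : (w, x.2) ∈ G := by
      apply hb
      rw [mem_ball, Prod.dist_eq]
      simp only [dist_self]
      rw [max_eq_left dist_nonneg, dist_eq_norm]
      exact hw
    have hopen : IsOpen {t : X₂ | (w, t) ∈ G} := hG.preimage (Continuous.prodMk_right w)
    exact (hf w).continuousAt (hopen.mem_nhds hwG)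
  have h2n : 1 / (2 * ((n : ℝ) + 1)) ≤ 1 / ((n : ℝ) + 1) := by
    apply one_div_le_one_div_of_le hn1
    linarith
  have h2n' : 1 / (2 * ((n : ℝ) + 1)) < 2 / ((n : ℝ) + 1) := by
    rw [div_lt_div_iff₀ (by positivity) hn1]
    linarith
  refine ⟨hxG, fun u v hu hv => ?_⟩
  have huv2 : ‖u + v‖ ≤ 1 / ((n : ℝ) + 1) := by
    have h4 : 1/(2*((n:ℝ)+1)) + 1/(2*((n:ℝ)+1)) = 1/((n:ℝ)+1) := by
      rw [← add_div, div_eq_div_iff (by positivity) hn1.ne']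
      ring
    calc ‖u + v‖ ≤ ‖u‖ + ‖v‖ := norm_add_le _ _
      _ ≤ 1 / ((n : ℝ) + 1) := by linarith
  have hcu : ContinuousAt (fun τ : X₂ => f (x.1 + u, τ)) x.2 := by
    refine hcont _ ?_
    rw [add_sub_cancel_left]
    exact lt_of_le_of_lt hu h2n'
  have hcv : ContinuousAt (fun τ : X₂ => f (x.1 + v, τ)) x.2 := by
    refine hcont _ ?_
    rw [add_sub_cancel_left]
    exact lt_of_le_of_lt hv h2n'
  have hc0 : ContinuousAt (fun τ : X₂ => f (x.1, τ)) x.2 := by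
    refine hcont _ ?_
    simp only [sub_self, norm_zero]
    positivity
  have hcuv : ContinuousAt (fun τ : X₂ => f (x.1 + (u + v), τ)) x.2 := by
    refine hcont _ ?_
    rw [add_sub_cancel_left]
    calc ‖u + v‖ ≤ 1 / ((n : ℝ) + 1) := huv2
      _ < 2 / ((n : ℝ) + 1) := by rw [div_lt_div_iff₀ hn1 hn1]; linarith
  refine ⟨?_, ?_, ?_⟩
  -- approximate additivity at the limit point
  · set F : X₂ → Y := fun τ => f (x.1 + u, τ) + f (x.1 + v, τ) - f (x.1, τ)
      - f (x.1 + (u + v), τ) with hF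
    have hFc : ContinuousAt F x.2 := ((hcu.add hcv).sub hc0).sub hcuv
    have hF0 : F x.2 = phiAux f x u + phiAux f x v - phiAux f x (u + v) := by
      simp only [hF, phiAux, Prod.mk.eta]
      abel
    rw [← hF0]
    refine le_of_forall_pos_le_add fun η hη => ?_
    have hη2 : (0:ℝ) < η / 2 := by positivity
    obtain ⟨ρ, hρpos, hρ⟩ := Metric.eventually_nhds_iff.mp
      (Metric.tendsto_nhds.mp hFc (η / 2) hη2)
    set ρ' : ℝ := min ρ (min (1 / (2 * ((n : ℝ) + 1))) (min (η * ((k : ℝ) + 1) / 6) (η / 2)))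
      with hρ'
    have hρ'pos : 0 < ρ' := by
      refine lt_min hρpos (lt_min (by positivity) (lt_min (by positivity) hη2))
    obtain ⟨y, hy, hxy⟩ := Metric.mem_closure_iff.mp hx ρ' hρ'pos
    have hy' : PredAux G f m k n y := hy
    set e : X₁ := x.1 - y.1 with he
    have he1 : ‖e‖ < ρ' := by
      rw [he, ← dist_eq_norm]
      calc dist x.1 y.1 ≤ dist x y := by rw [Prod.dist_eq]; exact le_max_left _ _
        _ < ρ' := hxy
    have hen : ‖e‖ ≤ 1 / ((n : ℝ) + 1) :=
      le_trans (le_trans he1.le ((min_le_right _ _).trans (min_le_left _ _))) h2n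
    have heη : ‖e‖ ≤ η * ((k : ℝ) + 1) / 6 :=
      le_trans he1.le ((min_le_right _ _).trans ((min_le_right _ _).trans (min_le_left _ _)))
    have hy2 : dist y.2 x.2 < ρ := by
      calc dist y.2 x.2 = dist x.2 y.2 := dist_comm _ _
        _ ≤ dist x y := by rw [Prod.dist_eq]; exact le_max_right _ _
        _ < ρ' := hxy
        _ ≤ ρ := min_le_left _ _
    have hFy : ‖F x.2 - F y.2‖ < η / 2 := by
      rw [← dist_eq_norm, dist_comm]
      exact hρ hy2
    have hu' : ‖u‖ ≤ 1 / ((n : ℝ) + 1) := hu.trans h2n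
    have hv' : ‖v‖ ≤ 1 / ((n : ℝ) + 1) := hv.trans h2n
    set B₁ := phiAux f y e + phiAux f y u - phiAux f y (e + u) with hB₁
    set B₂ := phiAux f y e + phiAux f y v - phiAux f y (e + v) with hB₂
    set B₃ := phiAux f y e + phiAux f y (u + v) - phiAux f y (e + (u + v)) with hB₃
    set B₄ := phiAux f y u + phiAux f y v - phiAux f y (u + v) with hB₄
    have hid : F y.2 = -B₁ - B₂ + B₃ + B₄ := by
      rw [hB₁, hB₂, hB₃, hB₄]
      simp only [phiAux, hF]
      rw [show y.1 + (e + u) = x.1 + u by rw [he]; abel,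
        show y.1 + (e + v) = x.1 + v by rw [he]; abel,
        show y.1 + (e + (u + v)) = x.1 + (u + v) by rw [he]; abel,
        show y.1 + e = x.1 by rw [he]; abel]
      abel
    have hBb1 : ‖B₁‖ ≤ (‖e‖ + ‖u‖) / ((k : ℝ) + 1) := hy'.2.1 e u hen hu'
    have hBb2 : ‖B₂‖ ≤ (‖e‖ + ‖v‖) / ((k : ℝ) + 1) := hy'.2.1 e v hen hv'
    have hBb3 : ‖B₃‖ ≤ (‖e‖ + ‖u + v‖) / ((k : ℝ) + 1) := hy'.2.1 e (u + v) hen huv2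
    have hBb4 : ‖B₄‖ ≤ (‖u‖ + ‖v‖) / ((k : ℝ) + 1) := hy'.2.1 u v hu' hv'
    have hFyb : ‖F y.2‖ ≤ (3 * ‖e‖ + 3 * (‖u‖ + ‖v‖)) / ((k : ℝ) + 1) := by
      have huvn : ‖u + v‖ ≤ ‖u‖ + ‖v‖ := norm_add_le _ _
      have h5 : ‖F y.2‖ ≤ ‖B₁‖ + ‖B₂‖ + ‖B₃‖ + ‖B₄‖ := by
        rw [hid]
        calc ‖-B₁ - B₂ + B₃ + B₄‖ ≤ ‖-B₁ - B₂ + B₃‖ + ‖B₄‖ := norm_add_le _ _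
          _ ≤ ‖-B₁ - B₂‖ + ‖B₃‖ + ‖B₄‖ := by gcongr; exact norm_add_le _ _
          _ ≤ ‖-B₁‖ + ‖B₂‖ + ‖B₃‖ + ‖B₄‖ := by gcongr; exact norm_sub_le _ _
          _ = ‖B₁‖ + ‖B₂‖ + ‖B₃‖ + ‖B₄‖ := by rw [norm_neg]
      have h6 : (‖e‖ + ‖u‖) / ((k:ℝ)+1) + (‖e‖ + ‖v‖) / ((k:ℝ)+1)
          + (‖e‖ + ‖u + v‖) / ((k:ℝ)+1) + (‖u‖ + ‖v‖) / ((k:ℝ)+1)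
          = (3 * ‖e‖ + 2 * ‖u‖ + 2 * ‖v‖ + ‖u + v‖) / ((k:ℝ)+1) := by ring
      have h7 : (3 * ‖e‖ + 2 * ‖u‖ + 2 * ‖v‖ + ‖u + v‖) / ((k:ℝ)+1)
          ≤ (3 * ‖e‖ + 3 * (‖u‖ + ‖v‖)) / ((k:ℝ)+1) := by
        exact (div_le_div_iff_of_pos_right hk1).mpr (by linarith)
      linarith
    have heb : 3 * ‖e‖ / ((k : ℝ) + 1) ≤ η / 2 := by
      rw [div_le_iff₀ hk1]
      nlinarith
    have hsplit : (3 * ‖e‖ + 3 * (‖u‖ + ‖v‖)) / ((k : ℝ) + 1)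
        = 3 * ‖e‖ / ((k : ℝ) + 1) + 3 * (‖u‖ + ‖v‖) / ((k : ℝ) + 1) := by ring
    have hfinal : ‖F x.2‖ ≤ ‖F y.2‖ + ‖F x.2 - F y.2‖ := by
      have := norm_sub_norm_le (F x.2) (F y.2)
      linarith [abs_nonneg (‖F x.2‖ - ‖F y.2‖)]
    linarith
  -- ray homogeneity at the limit point
  · intro t ht0 ht1
    have htu : ‖t • u‖ = t * ‖u‖ := by
      rw [norm_smul, Real.norm_eq_abs, abs_of_nonneg ht0]
    have htu' : ‖t • u‖ ≤ 1 / ((n : ℝ) + 1) := by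
      rw [htu]
      calc t * ‖u‖ ≤ 1 * ‖u‖ := mul_le_mul_of_nonneg_right ht1 (norm_nonneg u)
        _ = ‖u‖ := one_mul _
        _ ≤ 1 / ((n : ℝ) + 1) := hu.trans h2n
    have hctu : ContinuousAt (fun τ : X₂ => f (x.1 + t • u, τ)) x.2 := by
      refine hcont _ ?_
      rw [add_sub_cancel_left]
      exact lt_of_le_of_lt htu' (by rw [div_lt_div_iff₀ hn1 hn1]; linarith)
    set F : X₂ → Y := fun τ => f (x.1 + t • u, τ) - f (x.1, τ)
      - t • (f (x.1 + u, τ) - f (x.1, τ)) with hF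
    have hFc : ContinuousAt F x.2 :=
      (hctu.sub hc0).sub ((hcu.sub hc0).const_smul t)
    have hF0 : F x.2 = phiAux f x (t • u) - t • phiAux f x u := by
      simp only [hF, phiAux, Prod.mk.eta, smul_sub]
      try abel
    rw [← hF0]
    refine le_of_forall_pos_le_add fun η hη => ?_
    have hη2 : (0:ℝ) < η / 2 := by positivity
    obtain ⟨ρ, hρpos, hρ⟩ := Metric.eventually_nhds_iff.mp
      (Metric.tendsto_nhds.mp hFc (η / 2) hη2)
    set ρ' : ℝ := min ρ (min (1 / (2 * ((n : ℝ) + 1))) (min (η * ((k : ℝ) + 1) / 6) (η / 2)))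
      with hρ'
    have hρ'pos : 0 < ρ' :=
      lt_min hρpos (lt_min (by positivity) (lt_min (by positivity) hη2))
    obtain ⟨y, hy, hxy⟩ := Metric.mem_closure_iff.mp hx ρ' hρ'pos
    have hy' : PredAux G f m k n y := hy
    set e : X₁ := x.1 - y.1 with he
    have he1 : ‖e‖ < ρ' := by
      rw [he, ← dist_eq_norm]
      calc dist x.1 y.1 ≤ dist x y := by rw [Prod.dist_eq]; exact le_max_left _ _
        _ < ρ' := hxy
    have hen : ‖e‖ ≤ 1 / ((n : ℝ) + 1) :=
      le_trans (le_trans he1.le ((min_le_right _ _).trans (min_le_left _ _))) h2n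
    have heη : ‖e‖ ≤ η * ((k : ℝ) + 1) / 6 :=
      le_trans he1.le ((min_le_right _ _).trans ((min_le_right _ _).trans (min_le_left _ _)))
    have hy2 : dist y.2 x.2 < ρ := by
      calc dist y.2 x.2 = dist x.2 y.2 := dist_comm _ _
        _ ≤ dist x y := by rw [Prod.dist_eq]; exact le_max_right _ _
        _ < ρ' := hxy
        _ ≤ ρ := min_le_left _ _
    have hFy : ‖F x.2 - F y.2‖ < η / 2 := by
      rw [← dist_eq_norm, dist_comm]
      exact hρ hy2
    have hu' : ‖u‖ ≤ 1 / ((n : ℝ) + 1) := hu.trans h2n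
    set B₁ := phiAux f y e + phiAux f y (t • u) - phiAux f y (e + t • u) with hB₁
    set B₂ := phiAux f y (t • u) - t • phiAux f y u with hB₂
    set B₃ := phiAux f y e + phiAux f y u - phiAux f y (e + u) with hB₃
    have hid : F y.2 = -B₁ + B₂ + t • B₃ := by
      rw [hB₁, hB₂, hB₃]
      simp only [phiAux, hF]
      rw [show y.1 + (e + t • u) = x.1 + t • u by rw [he]; abel,
        show y.1 + (e + u) = x.1 + u by rw [he]; abel,
        show y.1 + e = x.1 by rw [he]; abel]
      simp only [smul_sub, smul_add]
      abel
    have hBb1 : ‖B₁‖ ≤ (‖e‖ + ‖t • u‖) / ((k : ℝ) + 1) := hy'.2.1 e (t • u) hen htu'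
    have hBb2 : ‖B₂‖ ≤ t * ‖u‖ / ((k : ℝ) + 1) := hy'.2.2.1 u hu' t ht0 ht1
    have hBb3 : ‖t • B₃‖ ≤ t * ((‖e‖ + ‖u‖) / ((k : ℝ) + 1)) := by
      rw [norm_smul, Real.norm_eq_abs, abs_of_nonneg ht0]
      exact mul_le_mul_of_nonneg_left (hy'.2.1 e u hen hu') ht0
    have hFyb : ‖F y.2‖ ≤ (2 * ‖e‖ + 3 * (t * ‖u‖)) / ((k : ℝ) + 1) := by
      have h5 : ‖F y.2‖ ≤ ‖B₁‖ + ‖B₂‖ + ‖t • B₃‖ := by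
        rw [hid]
        calc ‖-B₁ + B₂ + t • B₃‖ ≤ ‖-B₁ + B₂‖ + ‖t • B₃‖ := norm_add_le _ _
          _ ≤ ‖-B₁‖ + ‖B₂‖ + ‖t • B₃‖ := by gcongr; exact norm_add_le _ _
          _ = ‖B₁‖ + ‖B₂‖ + ‖t • B₃‖ := by rw [norm_neg]
      have h6 : (‖e‖ + ‖t • u‖) / ((k:ℝ)+1) + t * ‖u‖ / ((k:ℝ)+1)
          + t * ((‖e‖ + ‖u‖) / ((k:ℝ)+1))
          = (‖e‖ + 2 * (t * ‖u‖) + t * ‖e‖ + t * ‖u‖) / ((k:ℝ)+1) := by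
        rw [htu]; ring
      have h7 : (‖e‖ + 2 * (t * ‖u‖) + t * ‖e‖ + t * ‖u‖) / ((k:ℝ)+1)
          ≤ (2 * ‖e‖ + 3 * (t * ‖u‖)) / ((k:ℝ)+1) := by
        refine (div_le_div_iff_of_pos_right hk1).mpr ?_
        have h8 : t * ‖e‖ ≤ 1 * ‖e‖ := mul_le_mul_of_nonneg_right ht1 (norm_nonneg e)
        linarith
      linarith
    have heb : 2 * ‖e‖ / ((k : ℝ) + 1) ≤ η / 2 := by
      rw [div_le_iff₀ hk1]
      nlinarith
    have hsplit : (2 * ‖e‖ + 3 * (t * ‖u‖)) / ((k : ℝ) + 1)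
        = 2 * ‖e‖ / ((k : ℝ) + 1) + 3 * (t * ‖u‖) / ((k : ℝ) + 1) := by ring
    have hfinal : ‖F x.2‖ ≤ ‖F y.2‖ + ‖F x.2 - F y.2‖ := by
      have := norm_sub_norm_le (F x.2) (F y.2)
      linarith
    linarith
  -- pointwise Lipschitz bound at the limit point
  · set F : X₂ → Y := fun τ => f (x.1 + u, τ) - f (x.1, τ) with hF
    have hFc : ContinuousAt F x.2 := hcu.sub hc0
    have hF0 : F x.2 = phiAux f x u := by
      simp only [hF, phiAux, Prod.mk.eta]
    rw [← hF0]
    refine le_of_forall_pos_le_add fun η hη => ?_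
    have hη2 : (0:ℝ) < η / 2 := by positivity
    obtain ⟨ρ, hρpos, hρ⟩ := Metric.eventually_nhds_iff.mp
      (Metric.tendsto_nhds.mp hFc (η / 2) hη2)
    set ρ' : ℝ := min ρ (min (1 / (2 * ((n : ℝ) + 1))) (η / 2)) with hρ'
    have hρ'pos : 0 < ρ' := lt_min hρpos (lt_min (by positivity) hη2)
    obtain ⟨y, hy, hxy⟩ := Metric.mem_closure_iff.mp hx ρ' hρ'pos
    have hy' : PredAux G f m k n y := hy
    set e : X₁ := x.1 - y.1 with he
    have he1 : ‖e‖ < ρ' := by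
      rw [he, ← dist_eq_norm]
      calc dist x.1 y.1 ≤ dist x y := by rw [Prod.dist_eq]; exact le_max_left _ _
        _ < ρ' := hxy
    have hen : ‖e‖ ≤ 1 / ((n : ℝ) + 1) :=
      le_trans (le_trans he1.le ((min_le_right _ _).trans (min_le_left _ _))) h2n
    have heη : ‖e‖ ≤ η / 2 :=
      le_trans he1.le ((min_le_right _ _).trans (min_le_right _ _))
    have hy2 : dist y.2 x.2 < ρ := by
      calc dist y.2 x.2 = dist x.2 y.2 := dist_comm _ _
        _ ≤ dist x y := by rw [Prod.dist_eq]; exact le_max_right _ _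
        _ < ρ' := hxy
        _ ≤ ρ := min_le_left _ _
    have hFy : ‖F x.2 - F y.2‖ < η / 2 := by
      rw [← dist_eq_norm, dist_comm]
      exact hρ hy2
    have hu' : ‖u‖ ≤ 1 / ((n : ℝ) + 1) := hu.trans h2n
    set B₃ := phiAux f y e + phiAux f y u - phiAux f y (e + u) with hB₃
    have hid : F y.2 = -B₃ + phiAux f y u := by
      rw [hB₃]
      simp only [phiAux, hF]
      rw [show y.1 + (e + u) = x.1 + u by rw [he]; abel,
        show y.1 + e = x.1 by rw [he]; abel]
      abel
    have hBb3 : ‖B₃‖ ≤ (‖e‖ + ‖u‖) / ((k : ℝ) + 1) := hy'.2.1 e u hen hu'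
    have hBu : ‖phiAux f y u‖ ≤ ((m : ℝ) + 1) * ‖u‖ := hy'.2.2.2 u hu'
    have hdivle : (‖e‖ + ‖u‖) / ((k : ℝ) + 1) ≤ ‖e‖ + ‖u‖ := by
      apply div_le_self (by positivity)
      have := Nat.cast_nonneg (α := ℝ) k
      linarith
    have hFyb : ‖F y.2‖ ≤ ‖e‖ + ((m : ℝ) + 2) * ‖u‖ := by
      have h5 : ‖F y.2‖ ≤ ‖B₃‖ + ‖phiAux f y u‖ := by
        rw [hid]
        calc ‖-B₃ + phiAux f y u‖ ≤ ‖-B₃‖ + ‖phiAux f y u‖ := norm_add_le _ _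
          _ = ‖B₃‖ + ‖phiAux f y u‖ := by rw [norm_neg]
      have := norm_nonneg u
      nlinarith
    have hfinal : ‖F x.2‖ ≤ ‖F y.2‖ + ‖F x.2 - F y.2‖ := by
      have := norm_sub_norm_le (F x.2) (F y.2)
      linarith
    linarith

end Pred


theorem isFSigmaDeltaSigma_partial_frechet_points
    {X₁ X₂ Y : Type*} [NormedAddCommGroup X₁] [NormedSpace ℝ X₁] [CompleteSpace X₁]
    [NormedAddCommGroup X₂] [NormedSpace ℝ X₂] [CompleteSpace X₂]
    [NormedAddCommGroup Y] [NormedSpace ℝ Y] [CompleteSpace Y]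
    (G : Set (X₁ × X₂)) (hG : IsOpen G) (f : X₁ × X₂ → Y)
    (hf : ∀ a₁ : X₁, ContinuousOn (fun t : X₂ => f (a₁, t)) {t : X₂ | (a₁, t) ∈ G}) :
    IsFSigmaDeltaSigma {x ∈ G | DifferentiableAt ℝ (fun t : X₁ => f (t, x.2)) x.1} := by

  refine ⟨fun m => ⋂ k, ⋃ n, closure {y | PredAux G f m k n y},
    fun m => ⟨fun k => ⋃ n, closure {y | PredAux G f m k n y},
      fun k => ⟨fun n => closure {y | PredAux G f m k n y},
        fun n => isClosed_closure, rfl⟩, rfl⟩, ?_⟩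
  ext x
  simp only [mem_sep_iff, mem_iUnion, mem_iInter]
  constructor
  · rintro ⟨hxG, hdiff⟩
    obtain ⟨m, hm⟩ := predAux_of_diff hG hxG hdiff
    refine ⟨m, fun k => ?_⟩
    obtain ⟨n, hn⟩ := hm k
    exact ⟨n, subset_closure hn⟩
  · rintro ⟨m, hm⟩
    have hQ : ∀ k : ℕ, ∃ n : ℕ, x ∈ G ∧
        ∀ u v : X₁, ‖u‖ ≤ 1 / (2 * ((n : ℝ) + 1)) → ‖v‖ ≤ 1 / (2 * ((n : ℝ) + 1)) →
          (‖phiAux f x u + phiAux f x v - phiAux f x (u + v)‖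
            ≤ 3 * (‖u‖ + ‖v‖) / ((k : ℝ) + 1)) ∧
          (∀ t : ℝ, 0 ≤ t → t ≤ 1 →
            ‖phiAux f x (t • u) - t • phiAux f x u‖ ≤ 3 * (t * ‖u‖) / ((k : ℝ) + 1)) ∧
          ‖phiAux f x u‖ ≤ ((m : ℝ) + 2) * ‖u‖ := by
      intro k
      obtain ⟨n, hn⟩ := hm k
      exact ⟨n, closure_predAux hG hf hn⟩
    obtain ⟨n₀, hxG, -⟩ := hQ 0
    refine ⟨hxG, ?_⟩
    have H : ∀ ε : ℝ, 0 < ε → ∃ δ : ℝ, 0 < δ ∧ ∀ u v : X₁, ‖u‖ ≤ δ → ‖v‖ ≤ δ →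
        ‖phiAux f x u + phiAux f x v - phiAux f x (u + v)‖ ≤ ε * (‖u‖ + ‖v‖) ∧
        (∀ t : ℝ, 0 ≤ t → t ≤ 1 →
          ‖phiAux f x (t • u) - t • phiAux f x u‖ ≤ ε * (t * ‖u‖)) ∧
        ‖phiAux f x u‖ ≤ ((m : ℝ) + 2) * ‖u‖ := by
      intro ε hε
      obtain ⟨k, hk⟩ := exists_nat_ge (3 / ε)
      have hk1 : (0:ℝ) < (k : ℝ) + 1 := by positivity
      have h3 : 3 / ((k : ℝ) + 1) ≤ ε := by
        rw [div_le_iff₀ hk1]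
        rw [div_le_iff₀ hε] at hk
        nlinarith
      obtain ⟨n, -, hQk⟩ := hQ k
      refine ⟨1 / (2 * ((n : ℝ) + 1)), by positivity, fun u v hu hv => ?_⟩
      obtain ⟨h1, h2, h3'⟩ := hQk u v hu hv
      refine ⟨?_, ?_, h3'⟩
      · have he : 3 * (‖u‖ + ‖v‖) / ((k : ℝ) + 1) = 3 / ((k : ℝ) + 1) * (‖u‖ + ‖v‖) := by
          ring
        have hle : 3 / ((k : ℝ) + 1) * (‖u‖ + ‖v‖) ≤ ε * (‖u‖ + ‖v‖) :=
          mul_le_mul_of_nonneg_right h3 (by positivity)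
        linarith
      · intro t ht0 ht1
        have he : 3 * (t * ‖u‖) / ((k : ℝ) + 1) = 3 / ((k : ℝ) + 1) * (t * ‖u‖) := by
          ring
        have hle : 3 / ((k : ℝ) + 1) * (t * ‖u‖) ≤ ε * (t * ‖u‖) :=
          mul_le_mul_of_nonneg_right h3 (by positivity)
        have := h2 t ht0 ht1
        linarith
    obtain ⟨L, hL⟩ := aux_diff (phiAux f x) ((m : ℝ) + 2) H
    have hfd : HasFDerivAt (fun t : X₁ => f (t, x.2)) L x.1 := by
      rw [hasFDerivAt_iff_isLittleO_nhds_zero]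
      exact hL
    exact hfd.differentiableAt
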